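/- In the contracted diameter gadget (G',w'), for every i ∈ [1,2^s]: if there exists j ∈ [1,ℓ] with x_{i,j}=y_{i,j}=1 then d_{G',w'}(a_i, b_i) ≤ 2α; and if no such j exists then d_{G',w'}(a_i, b_i) ≥ min{α+β, 3α}. -/

import Mathlib

open scoped ENNReal

set_option linter.unusedVariables false

/-- The length of a walk with respect to `ℝ≥0∞` edge weights. -/
noncomputable def wlen {V : Type*} (G : SimpleGraph V) (w : V → V → ℝ≥0∞) {u v : V}
    (p : G.Walk u v) : ℝ≥0∞ :=
  (p.darts.map fun d => w d.toProd.1 d.toProd.2).sum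

/-- The weighted distance: the infimum of walk lengths. -/
noncomputable def wdist {V : Type*} (G : SimpleGraph V) (w : V → V → ℝ≥0∞) (u v : V) : ℝ≥0∞ :=
  ⨅ p : G.Walk u v, wlen G w p

/-- Vertices of the contracted diameter gadget. -/
inductive CV (s ℓ : ℕ) where
  /-- the hub `t` -/
  | t
  /-- node `a^z_{j+1}` -/
  | ah (z : Bool) (j : Fin s)
  /-- node `a*_{j+1}` -/
  | as (j : Fin ℓ)
  /-- node `a_{i+1}` -/
  | a (i : Fin (2 ^ s))
  /-- node `b_{i+1}` -/
  | b (i : Fin (2 ^ s))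
  deriving DecidableEq, Fintype

/-- Base (oriented) adjacency of the contracted diameter gadget.  Here `bin(i,j)` is
realized as `Nat.testBit` on the 0-based index, and `bin(i,j)⊕1` as its negation. -/
def cAdj0 {s ℓ : ℕ} : CV s ℓ → CV s ℓ → Prop
  | .t, .ah _ _ => True
  | .t, .as _ => True
  | .a i, .ah z j => z = i.val.testBit j.val
  | .b i, .ah z j => z = !(i.val.testBit j.val)
  | .a i, .a i' => i ≠ i'
  | .b i, .b i' => i ≠ i'
  | .a _, .as _ => True
  | .b _, .as _ => True
  | _, _ => False

/-- The contracted diameter gadget graph. -/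
def cGadget (s ℓ : ℕ) : SimpleGraph (CV s ℓ) where
  Adj u v := u ≠ v ∧ (cAdj0 u v ∨ cAdj0 v u)
  symm := ⟨fun u v huv => ⟨huv.1.symm, huv.2.symm⟩⟩
  loopless := ⟨fun u hu => hu.1 rfl⟩

/-- The weights of the contracted diameter gadget: every edge has weight `α`,
except `a_i`–`a*_j` which has weight `α` if `x_{i,j}=1` and `β` otherwise, and
`b_i`–`a*_j` which has weight `α` if `y_{i,j}=1` and `β` otherwise. -/
def cW {s ℓ : ℕ} (x y : Fin (2 ^ s) → Fin ℓ → Bool) (α β : ℕ) : CV s ℓ → CV s ℓ → ℕ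
  | .a i, .as j => if x i j then α else β
  | .as j, .a i => if x i j then α else β
  | .b i, .as j => if y i j then α else β
  | .as j, .b i => if y i j then α else β
  | _, _ => α


lemma cW_ge {s ℓ : ℕ} (x y : Fin (2 ^ s) → Fin ℓ → Bool) (α β : ℕ) (hαβ : α ≤ β)
    (u v : CV s ℓ) : α ≤ cW x y α β u v := by
  cases u <;> cases v <;> simp [cW] <;> split <;> omega

lemma wlen_cons {V : Type*} (G : SimpleGraph V) (w : V → V → ℝ≥0∞) {u v r : V}
    (h : G.Adj u v) (p : G.Walk v r) :
    wlen G w (SimpleGraph.Walk.cons h p) = w u v + wlen G w p := by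
  simp [wlen]

/-- In the contracted diameter gadget `(G',w')`, for every `i`:
if there exists `j` with `x_{i,j}=y_{i,j}=1` then `d_{G',w'}(a_i,b_i) ≤ 2α`; and if no
such `j` exists then `d_{G',w'}(a_i,b_i) ≥ min{α+β, 3α}`. -/
theorem stmt6 (s ℓ : ℕ) (hs : 1 ≤ s) (hℓ : 1 ≤ ℓ)
    (α β : ℕ) (hα : 0 < α) (hαβ : α ≤ β)
    (x y : Fin (2 ^ s) → Fin ℓ → Bool) (i : Fin (2 ^ s)) :
    ((∃ j : Fin ℓ, x i j = true ∧ y i j = true) →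
      wdist (cGadget s ℓ) (fun p q => ((cW x y α β p q : ℕ) : ℝ≥0∞)) (CV.a i) (CV.b i) ≤
        ((2 * α : ℕ) : ℝ≥0∞)) ∧
    ((¬ ∃ j : Fin ℓ, x i j = true ∧ y i j = true) →
      ((min (α + β) (3 * α) : ℕ) : ℝ≥0∞) ≤
        wdist (cGadget s ℓ) (fun p q => ((cW x y α β p q : ℕ) : ℝ≥0∞)) (CV.a i) (CV.b i)) := by
  set w : CV s ℓ → CV s ℓ → ℝ≥0∞ := fun p q => ((cW x y α β p q : ℕ) : ℝ≥0∞) with hwdef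
  have hge : ∀ u v : CV s ℓ, (α : ℝ≥0∞) ≤ w u v := fun u v =>
    Nat.cast_le.mpr (cW_ge x y α β hαβ u v)
  constructor
  · rintro ⟨j, hx, hy⟩
    have h1 : (cGadget s ℓ).Adj (CV.a i) (CV.as j) := by
      constructor
      · intro h; cases h
      · left; trivial
    have h2 : (cGadget s ℓ).Adj (CV.as j) (CV.b i) := by
      constructor
      · intro h; cases h
      · right; trivial
    have hle := iInf_le (fun p : (cGadget s ℓ).Walk (CV.a i) (CV.b i) =>
      wlen (cGadget s ℓ) w p) (SimpleGraph.Walk.cons h1 (SimpleGraph.Walk.cons h2 .nil))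
    refine le_trans hle ?_
    simp only [wlen_cons, hwdef]
    simp [wlen, cW, hx, hy, two_mul]
  · intro hno
    refine le_iInf fun p => ?_
    cases p with
    | cons h q =>
      rename_i v
      cases q with
      | nil =>
        exfalso
        obtain ⟨_, h | h⟩ := h <;> exact h
      | cons h2 r =>
        rename_i v2
        cases r with
        | nil =>
          -- two-dart walk through v
          rw [wlen_cons, wlen_cons]
          cases v with
          | t =>
            exfalso
            obtain ⟨_, h | h⟩ := h <;> exact h
          | ah z j =>
            exfalso
            obtain ⟨_, h | h⟩ := h
            · obtain ⟨_, h2 | h2⟩ := h2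
              · exact h2
              · simp only [cAdj0] at h h2
                rw [h] at h2
                simp at h2
            · exact h
          | as j =>
            rw [wlen]
            simp only [SimpleGraph.Walk.darts_nil, List.map_nil, List.sum_nil, add_zero, hwdef]
            have hkey : α + β ≤ cW x y α β (CV.a i) (CV.as j) + cW x y α β (CV.as j) (CV.b i) := by
              have hxy : ¬ (x i j = true ∧ y i j = true) := fun hc => hno ⟨j, hc⟩
              cases hxv : x i j <;> cases hyv : y i j <;> simp_all [cW] <;> omega
            calc ((min (α + β) (3 * α) : ℕ) : ℝ≥0∞) ≤ ((α + β : ℕ) : ℝ≥0∞) :=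
                  Nat.cast_le.mpr (min_le_left _ _)
              _ ≤ ((cW x y α β (CV.a i) (CV.as j) + cW x y α β (CV.as j) (CV.b i) : ℕ) : ℝ≥0∞) :=
                  Nat.cast_le.mpr hkey
              _ = _ := by push_cast; ring
          | a i' =>
            exfalso
            obtain ⟨_, h2 | h2⟩ := h2 <;> exact h2
          | b i' =>
            exfalso
            obtain ⟨_, h | h⟩ := h <;> exact h
        | cons h3 r' =>
          rw [wlen_cons, wlen_cons, wlen_cons]
          calc ((min (α + β) (3 * α) : ℕ) : ℝ≥0∞) ≤ ((3 * α : ℕ) : ℝ≥0∞) :=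
                Nat.cast_le.mpr (min_le_right _ _)
            _ = (α : ℝ≥0∞) + ((α : ℝ≥0∞) + ((α : ℝ≥0∞) + 0)) := by push_cast; ring
            _ ≤ _ := add_le_add (hge _ _) (add_le_add (hge _ _)
                (add_le_add (hge _ _) zero_le))
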